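/- Let V₁ = V₂ = W, let b₀,...,b_{B−1} be distinct unit-circle points, t₀,...,t_{T−1} unit-circle points, B the B×(2W+1) base point matrix with entries b_p^{W−q}, and T the T×(2W+1) target point matrix with entries t_p^{W−q}. Then the interpolation matrix T B† (where B† is the Moore–Penrose pseudoinverse) is real-valued, i.e., all its entries have zero imaginary part. -/

import Mathlib

open Matrix

/-- Uniqueness of the Moore–Penrose pseudoinverse. -/
lemma pinv_unique_aux {m n : Type*} [Fintype m] [Fintype n]
    (A : Matrix m n ℂ) (X Y : Matrix n m ℂ)
    (h1 : A * X * A = A) (h2 : X * A * X = X)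
    (h3 : (A * X)ᴴ = A * X) (h4 : (X * A)ᴴ = X * A)
    (g1 : A * Y * A = A) (g2 : Y * A * Y = Y)
    (g3 : (A * Y)ᴴ = A * Y) (g4 : (Y * A)ᴴ = Y * A) : X = Y := by
  have hAX : A * X = A * Y := by
    calc A * X = (A * X)ᴴ := h3.symm
    _ = Xᴴ * Aᴴ := by rw [conjTranspose_mul]
    _ = Xᴴ * (A * Y * A)ᴴ := by rw [g1]
    _ = Xᴴ * (Aᴴ * (A * Y)ᴴ) := by rw [conjTranspose_mul]
    _ = Xᴴ * (Aᴴ * (A * Y)) := by rw [g3]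
    _ = (Xᴴ * Aᴴ) * (A * Y) := by rw [Matrix.mul_assoc]
    _ = (A * X)ᴴ * (A * Y) := by rw [conjTranspose_mul]
    _ = (A * X) * (A * Y) := by rw [h3]
    _ = (A * X * A) * Y := by simp only [Matrix.mul_assoc]
    _ = A * Y := by rw [h1]
  have hXA : X * A = Y * A := by
    calc X * A = (X * A)ᴴ := h4.symm
    _ = Aᴴ * Xᴴ := by rw [conjTranspose_mul]
    _ = (A * Y * A)ᴴ * Xᴴ := by rw [g1]
    _ = ((Y * A)ᴴ * Aᴴ) * Xᴴ := by
        rw [show A * Y * A = A * (Y * A) from by simp only [Matrix.mul_assoc],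
          conjTranspose_mul]
    _ = ((Y * A) * Aᴴ) * Xᴴ := by rw [g4]
    _ = (Y * A) * (Aᴴ * Xᴴ) := by rw [Matrix.mul_assoc]
    _ = (Y * A) * (X * A)ᴴ := by rw [conjTranspose_mul]
    _ = (Y * A) * (X * A) := by rw [h4]
    _ = Y * (A * X * A) := by simp only [Matrix.mul_assoc]
    _ = Y * A := by rw [h1]
  calc X = X * A * X := h2.symm
  _ = X * (A * Y) := by rw [Matrix.mul_assoc, hAX]
  _ = (X * A) * Y := by rw [Matrix.mul_assoc]
  _ = (Y * A) * Y := by rw [hXA]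
  _ = Y := g2

/-- The exchange (anti-diagonal) matrix. -/
def exchMat (n : ℕ) : Matrix (Fin n) (Fin n) ℂ :=
  Matrix.of fun i j => if i = Fin.rev j then 1 else 0

lemma mul_exch {m : Type*} {k : ℕ} [Fintype m]
    (M : Matrix m (Fin k) ℂ) (p : m) (q : Fin k) :
    (M * exchMat k) p q = M p (Fin.rev q) := by
  simp only [Matrix.mul_apply, exchMat, Matrix.of_apply, mul_ite, mul_one, mul_zero]
  rw [Finset.sum_ite_eq' _ (Fin.rev q)]
  simp

lemma exch_mul {m : Type*} {k : ℕ} [Fintype m]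
    (M : Matrix (Fin k) m ℂ) (p : Fin k) (q : m) :
    (exchMat k * M) p q = M (Fin.rev p) q := by
  simp only [Matrix.mul_apply, exchMat, Matrix.of_apply, ite_mul, one_mul, zero_mul]
  have : ∀ x : Fin k, (p = Fin.rev x) = (x = Fin.rev p) := by
    intro x
    apply propext
    constructor
    · rintro rfl; simp [Fin.rev_rev]
    · rintro rfl; simp [Fin.rev_rev]
  simp only [this]
  rw [Finset.sum_ite_eq' _ (Fin.rev p)]
  simp

lemma exch_exch (k : ℕ) : exchMat k * exchMat k = 1 := by
  ext i j
  rw [mul_exch]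
  simp only [exchMat, Matrix.of_apply, Matrix.one_apply, Fin.rev_rev]

lemma exch_conjTranspose (k : ℕ) : (exchMat k)ᴴ = exchMat k := by
  ext i j
  simp only [conjTranspose_apply, exchMat, Matrix.of_apply]
  have h : (j = Fin.rev i) ↔ (i = Fin.rev j) := by
    constructor
    · rintro rfl; simp [Fin.rev_rev]
    · rintro rfl; simp [Fin.rev_rev]
  simp only [apply_ite (star : ℂ → ℂ), star_one, star_zero, h]

theorem interpolation_matrix_real {B T W : ℕ} (hBW : 2 * W + 1 ≤ B)
    (b : Fin B → ℂ) (t : Fin T → ℂ)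
    (hinj : Function.Injective b)
    (hb : ∀ p, ‖b p‖ = 1) (ht : ∀ p, ‖t p‖ = 1)
    (Bm : Matrix (Fin B) (Fin (2 * W + 1)) ℂ)
    (hBm : Bm = Matrix.of fun (p : Fin B) (q : Fin (2 * W + 1)) => b p ^ ((W : ℤ) - ((q : ℕ) : ℤ)))
    (Tm : Matrix (Fin T) (Fin (2 * W + 1)) ℂ)
    (hTm : Tm = Matrix.of fun (p : Fin T) (q : Fin (2 * W + 1)) => t p ^ ((W : ℤ) - ((q : ℕ) : ℤ)))
    (Bd : Matrix (Fin (2 * W + 1)) (Fin B) ℂ)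
    (hBd1 : Bm * Bd * Bm = Bm) (hBd2 : Bd * Bm * Bd = Bd)
    (hBd3 : (Bm * Bd)ᴴ = Bm * Bd) (hBd4 : (Bd * Bm)ᴴ = Bd * Bm) :
    ∀ (i : Fin T) (j : Fin B), ((Tm * Bd) i j).im = 0 := by
  set c := starRingEnd ℂ
  set E := exchMat (2 * W + 1) with hE
  -- conjugation of a unit-circle power flips the exponent
  have key : ∀ (z : ℂ), ‖z‖ = 1 → ∀ q : Fin (2 * W + 1),
      c (z ^ ((W : ℤ) - ((q : ℕ) : ℤ))) = z ^ ((W : ℤ) - (((Fin.rev q : Fin (2*W+1)) : ℕ) : ℤ)) := by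
    intro z hz q
    have hz0 : z ≠ 0 := by
      intro h; rw [h] at hz; simp at hz
    have hconj : c z = z⁻¹ := by
      have h1 : z * c z = 1 := by
        rw [Complex.mul_conj]
        norm_cast
        rw [Complex.normSq_eq_norm_sq, hz, one_pow]
      field_simp at h1 ⊢
      linear_combination h1
    rw [map_zpow₀, hconj, _root_.inv_zpow, ← _root_.zpow_neg]
    congr 1
    have hq : (q : ℕ) ≤ 2 * W := Nat.lt_succ_iff.mp q.isLt
    have : ((Fin.rev q : Fin (2*W+1)) : ℕ) = 2 * W - (q : ℕ) := by
      rw [Fin.val_rev]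
      omega
    rw [this]
    omega
  have hcBm : Bm.map c = Bm * E := by
    ext p q
    rw [mul_exch]
    simp only [Matrix.map_apply, hBm, Matrix.of_apply]
    exact key (b p) (hb p) q
  have hcTm : Tm.map c = Tm * E := by
    ext p q
    rw [mul_exch]
    simp only [Matrix.map_apply, hTm, Matrix.of_apply]
    exact key (t p) (ht p) q
  -- map c commutes with products and conjTranspose
  have mapc_mul : ∀ {α β γ : Type} [Fintype α] [Fintype β] [Fintype γ]
      (M : Matrix α β ℂ) (N : Matrix β γ ℂ), (M * N).map c = M.map c * N.map c := by
    intro α β γ _ _ _ M N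
    exact Matrix.map_mul
  have mapc_ct : ∀ {α β : Type} [Fintype α] [Fintype β]
      (M : Matrix α β ℂ), (M.map c)ᴴ = Mᴴ.map c := by
    intro α β _ _ M
    ext i j
    simp [Matrix.map_apply, Complex.ext_iff]
  -- Bd.map c and E * Bd are both pseudoinverses of Bm * E
  have hcBd : Bd.map c = E * Bd := by
    apply pinv_unique_aux (Bm * E)
    · rw [← hcBm, ← mapc_mul, ← mapc_mul, hBd1]
    · rw [← hcBm, ← mapc_mul, ← mapc_mul, hBd2]
    · rw [← hcBm, ← mapc_mul, mapc_ct, hBd3]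
    · rw [← hcBm, ← mapc_mul, mapc_ct, hBd4]
    · rw [show Bm * E * (E * Bd) * (Bm * E) = Bm * (E * E) * Bd * Bm * E by
        simp only [Matrix.mul_assoc], exch_exch]
      simp only [Matrix.mul_one, ← Matrix.mul_assoc, hBd1]
    · rw [show E * Bd * (Bm * E) * (E * Bd) = E * (Bd * (Bm * ((E * E) * Bd))) by
        simp only [Matrix.mul_assoc], exch_exch]
      simp only [Matrix.one_mul, ← Matrix.mul_assoc, hBd2]
    · rw [show Bm * E * (E * Bd) = Bm * (E * E) * Bd by simp only [Matrix.mul_assoc], exch_exch]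
      simp only [Matrix.mul_one, hBd3]
    · rw [show E * Bd * (Bm * E) = E * (Bd * Bm) * E by simp only [Matrix.mul_assoc]]
      rw [conjTranspose_mul, conjTranspose_mul, exch_conjTranspose, hBd4]
      simp only [Matrix.mul_assoc]
      rfl
  -- conclude : Tm * Bd is self-conjugate
  have hfinal : (Tm * Bd).map c = Tm * Bd := by
    rw [mapc_mul, hcTm, hcBd, show Tm * E * (E * Bd) = Tm * (E * E) * Bd by
      simp only [Matrix.mul_assoc], exch_exch, Matrix.mul_one]
  intro i j
  have := congrFun (congrFun hfinal i) j
  simp only [Matrix.map_apply] at this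
  have h2 : c ((Tm * Bd) i j) = (Tm * Bd) i j := this
  exact Complex.conj_eq_iff_im.mp h2
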